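/- Consider the planar ODE ẋ = −x p, ṗ = x²p/(1 + x²) (the S¹-reduced light Chaplygin sleigh on a cylinder). For every p₀ > 0, the equilibrium (0, p₀) is Lyapunov stable: for every ε > 0 there exists δ > 0 such that every differentiable curve γ : [0,∞) → ℝ² satisfying γ'(t) = (−γ₁(t)γ₂(t), γ₁(t)²γ₂(t)/(1+γ₁(t)²)) for all t ≥ 0 and ‖γ(0) − (0,p₀)‖ < δ satisfies ‖γ(t) − (0,p₀)‖ < ε for all t ≥ 0. -/

import Mathlib

open Set

/-- Lyapunov stability of the equilibrium `(0, p₀)`, `p₀ > 0`, of the planar ODE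
`ẋ = −xp, ṗ = x²p/(1+x²)` (the S¹-reduced light Chaplygin sleigh on a cylinder). -/
theorem stmt_9 (p₀ : ℝ) (hp₀ : 0 < p₀) :
    ∀ ε > 0, ∃ δ > 0, ∀ γ : ℝ → ℝ × ℝ,
      (∀ t ∈ Set.Ici (0 : ℝ), HasDerivWithinAt γ
        (-(γ t).1 * (γ t).2, (γ t).1 ^ 2 * (γ t).2 / (1 + (γ t).1 ^ 2)) (Set.Ici 0) t) →
      ‖γ 0 - ((0 : ℝ), p₀)‖ < δ → ∀ t ≥ (0 : ℝ), ‖γ t - ((0 : ℝ), p₀)‖ < ε := by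
  intro ε hε
  set d : ℝ := min (min ε p₀) 1 / 4 with hd_def
  have hd0 : 0 < d := by
    have : 0 < min (min ε p₀) 1 := lt_min (lt_min hε hp₀) one_pos
    positivity
  have hdε : d ≤ ε / 4 := by
    have h1 : min (min ε p₀) 1 ≤ ε := (min_le_left _ _).trans (min_le_left _ _)
    rw [hd_def]; linarith
  have hdp : d ≤ p₀ / 4 := by
    have h1 : min (min ε p₀) 1 ≤ p₀ := (min_le_left _ _).trans (min_le_right _ _)
    rw [hd_def]; linarith
  have hd1 : d ≤ 1 / 4 := by
    have h1 : min (min ε p₀) 1 ≤ 1 := min_le_right _ _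
    rw [hd_def]; linarith
  have hd2 : d ^ 2 ≤ d := by nlinarith
  refine ⟨d, hd0, ?_⟩
  intro γ hγ hγ0 t ht
  -- component derivatives
  have hx' : ∀ s ∈ Ici (0 : ℝ), HasDerivWithinAt (fun τ => (γ τ).1)
      (-(γ s).1 * (γ s).2) (Ici 0) s := fun s hs =>
    (ContinuousLinearMap.fst ℝ ℝ ℝ).hasFDerivAt.comp_hasDerivWithinAt s (hγ s hs)
  have hp' : ∀ s ∈ Ici (0 : ℝ), HasDerivWithinAt (fun τ => (γ τ).2)
      ((γ s).1 ^ 2 * (γ s).2 / (1 + (γ s).1 ^ 2)) (Ici 0) s := fun s hs =>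
    (ContinuousLinearMap.snd ℝ ℝ ℝ).hasFDerivAt.comp_hasDerivWithinAt s (hγ s hs)
  have hu : ∀ s ∈ Ici (0 : ℝ), HasDerivWithinAt (fun τ => (γ τ).1 ^ 2)
      (-(2 * (γ s).1 ^ 2 * (γ s).2)) (Ici 0) s := by
    intro s hs
    have := (hx' s hs).fun_pow 2
    refine this.congr_deriv ?_
    ring
  have hpos : ∀ s : ℝ, (0:ℝ) < 1 + (γ s).1 ^ 2 := fun s => by positivity
  have hlog : ∀ s ∈ Ici (0 : ℝ), HasDerivWithinAt (fun τ => Real.log (1 + (γ τ).1 ^ 2))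
      (-(2 * (γ s).1 ^ 2 * (γ s).2) / (1 + (γ s).1 ^ 2)) (Ici 0) s := by
    intro s hs
    have h1 : HasDerivWithinAt (fun τ => 1 + (γ τ).1 ^ 2)
        (-(2 * (γ s).1 ^ 2 * (γ s).2)) (Ici 0) s := by
      exact (hu s hs).const_add 1
    exact h1.log (ne_of_gt (hpos s))
  -- conserved quantity H = p + log(1+x²)/2
  set H : ℝ → ℝ := fun τ => (γ τ).2 + Real.log (1 + (γ τ).1 ^ 2) / 2 with hH_def
  have hH : ∀ s ∈ Ici (0 : ℝ), HasDerivWithinAt H 0 (Ici 0) s := by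
    intro s hs
    have := (hp' s hs).fun_add ((hlog s hs).div_const 2)
    refine this.congr_deriv ?_
    have := hpos s
    field_simp
    ring
  have hHcont : ContinuousOn H (Ici 0) := fun s hs => (hH s hs).continuousWithinAt
  have hHder : ∀ s ∈ interior (Ici (0:ℝ)), HasDerivWithinAt H
      ((fun _ => (0:ℝ)) s) (interior (Ici (0:ℝ))) s :=
    fun s hs => (hH s (interior_subset hs)).mono interior_subset
  have hanti : AntitoneOn H (Ici 0) :=
    antitoneOn_of_hasDerivWithinAt_nonpos (convex_Ici 0) hHcont hHder (fun _ _ => le_refl 0)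
  have hmono : MonotoneOn H (Ici 0) :=
    monotoneOn_of_hasDerivWithinAt_nonneg (convex_Ici 0) hHcont hHder (fun _ _ => le_refl 0)
  have hHconst : ∀ s ∈ Ici (0:ℝ), H s = H 0 :=
    fun s hs => le_antisymm (hanti self_mem_Ici hs hs) (hmono self_mem_Ici hs hs)
  -- initial bounds
  have hx0 : |(γ 0).1| < d := by
    have h1 : ‖(γ 0 - ((0:ℝ), p₀)).1‖ ≤ ‖γ 0 - ((0:ℝ), p₀)‖ := norm_fst_le _
    simp only [Prod.fst_sub, Real.norm_eq_abs, sub_zero] at h1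
    exact lt_of_le_of_lt h1 hγ0
  have hp0 : |(γ 0).2 - p₀| < d := by
    have h1 : ‖(γ 0 - ((0:ℝ), p₀)).2‖ ≤ ‖γ 0 - ((0:ℝ), p₀)‖ := norm_snd_le _
    simp only [Prod.snd_sub, Real.norm_eq_abs] at h1
    exact lt_of_le_of_lt h1 hγ0
  have hu0 : (γ 0).1 ^ 2 < d ^ 2 := by
    have : |(γ 0).1| ^ 2 < d ^ 2 := by
      apply pow_lt_pow_left₀ hx0 (abs_nonneg _)
      norm_num
    simpa [sq_abs] using this
  have hucont : ContinuousOn (fun s => (γ s).1 ^ 2) (Ici (0:ℝ)) :=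
    fun s hs => (hu s hs).continuousWithinAt
  -- key claim: x² stays below 2d²
  have hkey : ∀ s : ℝ, 0 ≤ s → (γ s).1 ^ 2 < 2 * d ^ 2 := by
    by_contra hcon
    push_neg at hcon
    obtain ⟨t₀, ht₀, hge⟩ := hcon
    set S : Set ℝ := Ici 0 ∩ (fun s => (γ s).1 ^ 2) ⁻¹' Ici (2 * d ^ 2) with hS_def
    have hSne : S.Nonempty := ⟨t₀, ht₀, hge⟩
    have hSbd : BddBelow S := ⟨0, fun a ha => ha.1⟩
    have hSclosed : IsClosed S :=
      hucont.preimage_isClosed_of_isClosed isClosed_Ici isClosed_Ici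
    have hTmem := hSclosed.csInf_mem hSne hSbd
    set T := sInf S with hT_def
    obtain ⟨hT0, hTr⟩ := hTmem
    have hT0' : (0:ℝ) ≤ T := hT0
    have hTr' : 2 * d ^ 2 ≤ (γ T).1 ^ 2 := hTr
    -- below T, x² < 2d²
    have hlt : ∀ s : ℝ, 0 ≤ s → s < T → (γ s).1 ^ 2 < 2 * d ^ 2 := by
      intro s h0 hsT
      by_contra h
      push_neg at h
      exact absurd (csInf_le hSbd ⟨h0, h⟩) (not_le.2 hsT)
    -- p ≥ 0 on (0,T)
    have hppos : ∀ s ∈ Ioo (0:ℝ) T, 0 ≤ (γ s).2 := by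
      intro s hs
      have hs0 : (0:ℝ) ≤ s := le_of_lt hs.1
      have hEq : H s = H 0 := hHconst s hs0
      have hus : (γ s).1 ^ 2 < 2 * d ^ 2 := hlt s hs0 hs.2
      have hlog1 : Real.log (1 + (γ s).1 ^ 2) ≤ 2 * d ^ 2 := by
        have h := Real.log_le_sub_one_of_pos (hpos s)
        linarith [hus]
      have hlog0 : (0:ℝ) ≤ Real.log (1 + (γ 0).1 ^ 2) :=
        Real.log_nonneg (by linarith [sq_nonneg (γ 0).1])
      have habs := abs_lt.1 hp0
      simp only [hH_def] at hEq
      linarith [habs.1, habs.2, hlog1, hlog0, hdp, hd2, hp₀]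
    -- x² antitone on [0,T]
    have hantiu : AntitoneOn (fun s => (γ s).1 ^ 2) (Icc 0 T) := by
      apply antitoneOn_of_hasDerivWithinAt_nonpos (f' := fun s => -(2 * (γ s).1 ^ 2 * (γ s).2))
        (convex_Icc 0 T) (hucont.mono Icc_subset_Ici_self)
      · intro s hs
        rw [interior_Icc] at hs ⊢
        exact (hu s (le_of_lt hs.1)).mono (fun y hy => le_of_lt hy.1)
      · intro s hs
        rw [interior_Icc] at hs
        have h1 := hppos s hs
        have h2 := sq_nonneg (γ s).1
        nlinarith [mul_nonneg h2 h1]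
    have hfin := hantiu (left_mem_Icc.2 hT0') (right_mem_Icc.2 hT0') hT0'
    simp only at hfin
    nlinarith [sq_nonneg d, hd0, hu0, hTr']
  -- conclude
  have hut : (γ t).1 ^ 2 < 2 * d ^ 2 := hkey t ht
  have hEq : H t = H 0 := hHconst t ht
  simp only [hH_def] at hEq
  have hlogt1 : Real.log (1 + (γ t).1 ^ 2) ≤ 2 * d ^ 2 := by
    have h := Real.log_le_sub_one_of_pos (hpos t)
    linarith [hut]
  have hlogt0 : (0:ℝ) ≤ Real.log (1 + (γ t).1 ^ 2) :=
    Real.log_nonneg (by linarith [sq_nonneg (γ t).1])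
  have hlog01 : Real.log (1 + (γ 0).1 ^ 2) ≤ 2 * d ^ 2 := by
    have h := Real.log_le_sub_one_of_pos (hpos 0)
    have h2 : d ^ 2 ≤ 2 * d ^ 2 := by nlinarith [sq_nonneg d]
    linarith [hu0]
  have hlog00 : (0:ℝ) ≤ Real.log (1 + (γ 0).1 ^ 2) :=
    Real.log_nonneg (by linarith [sq_nonneg (γ 0).1])
  have habs := abs_lt.1 hp0
  rw [Prod.norm_def]
  simp only [Prod.fst_sub, Prod.snd_sub, Real.norm_eq_abs, sub_zero]
  apply max_lt
  · apply abs_lt_of_sq_lt_sq _ (le_of_lt hε)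
    have hdsq : d ^ 2 ≤ (ε / 4) ^ 2 := pow_le_pow_left₀ (le_of_lt hd0) hdε 2
    have h3 : 0 < ε ^ 2 := by positivity
    nlinarith [hut, hdsq, hε, h3]
  · rw [abs_lt]
    constructor <;> linarith [hEq, hlogt1, hlogt0, hlog01, hlog00, habs.1, habs.2, hd2, hdε, hd0]
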